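/- Let u, v, p, q, r be real numbers, all greater than 1, such that 1/u + 1/v = 1 and 1/(u(p − 1)) + 1/(v(q − 1)) = 1/(r − 1); write p' = p/(p − 1), q' = q/(q − 1), r' = r/(r − 1), and set α = q'/(v √(p' q' r')), β = r'/√(p' q' r'), γ = p'/(u √(p' q' r')). Let s, t > 0 and define f(x) = (p s)^{1/(2p)} e^{−s x²/2} and g(x) = (q t)^{1/(2q)} e^{−t x²/2} (so that ‖f‖_{L^p(d_N)} = ‖g‖_{L^q(d_N)} = 1). Then { ∫_ℝ [ ∫_ℝ f(x − y) g(y) exp( −(1/(2 p' q' r')) ((q'/v) x − r' y)² ) d_N y ]^r d_N x }^{1/r} = [ (p^{1/p} q^{1/q} / r^{1/r}) · s^{1/p} t^{1/q} / ( (s + t + β²)^{1/r'} (γ² s + α² t + s t)^{1/r} ) ]^{1/2}. -/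

import Mathlib

open MeasureTheory Real

noncomputable def normalizedLebesgueR : Measure ℝ :=
  ENNReal.ofReal ((2 * Real.pi) ^ (-(1 : ℝ) / 2)) • (volume : Measure ℝ)

lemma gaussN (a : ℝ) (ha : 0 < a) (c : ℝ) :
    ∫ y, Real.exp (-(a/2) * (y - c)^2) ∂normalizedLebesgueR = (Real.sqrt a)⁻¹ := by
  rw [normalizedLebesgueR, integral_smul_measure]
  have h1 : ∫ y : ℝ, Real.exp (-(a/2) * (y - c)^2) = Real.sqrt (π / (a/2)) := by
    rw [← integral_gaussian (a/2)]
    exact integral_sub_right_eq_self (fun y => Real.exp (-(a/2) * y^2)) c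
  rw [h1, ENNReal.toReal_ofReal (by positivity), smul_eq_mul]
  have h2π : (0:ℝ) < 2*π := by positivity
  rw [show (-(1:ℝ)/2) = -(1/2) by norm_num, Real.rpow_neg h2π.le, ← Real.sqrt_eq_rpow,
    show π/(a/2) = (2*π)/a by ring, Real.sqrt_div h2π.le]
  have hs : Real.sqrt (2*π) ≠ 0 := by positivity
  have hsa : Real.sqrt a ≠ 0 := by positivity
  field_simp

lemma exp_helper (C1 C2 a b c : ℝ) :
    (C1 * Real.exp a) * (C2 * Real.exp b) * Real.exp c = C1 * C2 * Real.exp (a + b + c) := by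
  rw [Real.exp_add, Real.exp_add]; ring

theorem gaussian_trial_function_computation
    (u v p q r : ℝ)
    (hu : 1 < u) (hv : 1 < v) (hp : 1 < p) (hq : 1 < q) (hr : 1 < r)
    (huv : 1 / u + 1 / v = 1)
    (hcond : 1 / (u * (p - 1)) + 1 / (v * (q - 1)) = 1 / (r - 1))
    (p' q' r' : ℝ) (hp' : p' = p / (p - 1)) (hq' : q' = q / (q - 1)) (hr' : r' = r / (r - 1))
    (α β γ : ℝ)
    (hα : α = q' / (v * Real.sqrt (p' * q' * r')))
    (hβ : β = r' / Real.sqrt (p' * q' * r'))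
    (hγ : γ = p' / (u * Real.sqrt (p' * q' * r')))
    (s t : ℝ) (hs : 0 < s) (ht : 0 < t)
    (f g : ℝ → ℝ)
    (hf : ∀ x, f x = (p * s) ^ (1 / (2 * p)) * Real.exp (-s * x ^ 2 / 2))
    (hg : ∀ x, g x = (q * t) ^ (1 / (2 * q)) * Real.exp (-t * x ^ 2 / 2)) :
    (∫ x, (∫ y, f (x - y) * g y
          * Real.exp (-(1 / (2 * p' * q' * r')) * ((q' / v) * x - r' * y) ^ 2)
          ∂normalizedLebesgueR) ^ r ∂normalizedLebesgueR) ^ (1 / r)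
    = ((p ^ (1 / p) * q ^ (1 / q) / r ^ (1 / r))
        * (s ^ (1 / p) * t ^ (1 / q)
          / ((s + t + β ^ 2) ^ (1 / r')
            * (γ ^ 2 * s + α ^ 2 * t + s * t) ^ (1 / r)))) ^ ((1 : ℝ) / 2) := by
  have hu0 : (0:ℝ) < u := by linarith
  have hv0 : (0:ℝ) < v := by linarith
  have hp0 : (0:ℝ) < p := by linarith
  have hq0 : (0:ℝ) < q := by linarith
  have hr0 : (0:ℝ) < r := by linarith
  have hp1 : (0:ℝ) < p - 1 := by linarith
  have hq1 : (0:ℝ) < q - 1 := by linarith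
  have hr1 : (0:ℝ) < r - 1 := by linarith
  have hp'0 : 0 < p' := by rw [hp']; positivity
  have hq'0 : 0 < q' := by rw [hq']; positivity
  have hr'0 : 0 < r' := by rw [hr']; positivity
  have hP : 0 < p' * q' * r' := by positivity
  set S := Real.sqrt (p' * q' * r') with hSdef
  have hS0 : 0 < S := Real.sqrt_pos.2 hP
  have hS2 : S ^ 2 = p' * q' * r' := Real.sq_sqrt hP.le
  have hα0 : 0 < α := by rw [hα]; positivity
  have hβ0 : 0 < β := by rw [hβ]; positivity
  have hγ0 : 0 < γ := by rw [hγ]; positivity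
  have hαS : α * S = q' / v := by rw [hα]; field_simp
  have hβS : β * S = r' := by rw [hβ]; field_simp
  -- p'/u + q'/v = r'
  have h1 : p' / u = 1/u + 1/(u*(p-1)) := by rw [hp']; field_simp; ring_nf
  have h2 : q' / v = 1/v + 1/(v*(q-1)) := by rw [hq']; field_simp; ring_nf
  have h3 : r' = 1 + 1/(r-1) := by rw [hr']; field_simp; ring
  have hsum : p' / u + q' / v = r' := by rw [h1, h2, h3]; linarith
  have hγβα : γ = β - α := by
    rw [hα, hβ, hγ, ← hsum]; field_simp; ring
  set A := s + t + β ^ 2 with hAdef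
  set E := γ ^ 2 * s + α ^ 2 * t + s * t with hEdef
  have hA0 : 0 < A := by positivity
  have hE0 : 0 < E := by positivity
  set Cf := (p * s) ^ (1 / (2 * p)) with hCf
  set Cg := (q * t) ^ (1 / (2 * q)) with hCg
  have hCf0 : 0 < Cf := by rw [hCf]; positivity
  have hCg0 : 0 < Cg := by rw [hCg]; positivity
  -- exponent rewriting
  have hexp : ∀ x y : ℝ, -(1 / (2 * p' * q' * r')) * ((q' / v) * x - r' * y) ^ 2
      = -((α*x - β*y)^2)/2 := by
    intro x y
    rw [show (2 * p' * q' * r') = 2 * S^2 by rw [hS2]; ring, ← hαS, ← hβS]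
    field_simp
  -- pointwise identity for the inner integrand
  have hpt : ∀ x y : ℝ, f (x - y) * g y
      * Real.exp (-(1 / (2 * p' * q' * r')) * ((q' / v) * x - r' * y) ^ 2)
      = (Cf * Cg * Real.exp (-((E/A) * x^2)/2))
        * Real.exp (-(A/2) * (y - (s + α*β)*x/A)^2) := by
    intro x y
    rw [hf, hg, hexp x y, exp_helper]
    have harg : (-s * (x-y) ^ 2 / 2) + (-t * y^2 / 2) + (-((α*x - β*y)^2)/2)
        = (-((E/A) * x^2)/2) + (-(A/2) * (y - (s + α*β)*x/A)^2) := by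
      rw [hEdef, hAdef, hγβα]
      field_simp
      ring
    rw [harg, Real.exp_add]
    ring
  -- inner integral
  have hinner : ∀ x : ℝ, (∫ y, f (x - y) * g y
      * Real.exp (-(1 / (2 * p' * q' * r')) * ((q' / v) * x - r' * y) ^ 2)
      ∂normalizedLebesgueR)
      = (Cf * Cg * (Real.sqrt A)⁻¹) * Real.exp (-((E/A)/2) * (x - 0)^2) := by
    intro x
    rw [show (fun y => f (x - y) * g y
      * Real.exp (-(1 / (2 * p' * q' * r')) * ((q' / v) * x - r' * y) ^ 2))
      = (fun y => (Cf * Cg * Real.exp (-((E/A) * x^2)/2))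
        * Real.exp (-(A/2) * (y - (s + α*β)*x/A)^2)) from funext (hpt x)]
    rw [integral_const_mul, gaussN A hA0 _]
    rw [show -((E/A)/2) * (x - 0)^2 = -((E/A) * x^2)/2 by ring]
    ring
  -- pointwise rpow of the inner integral
  have hC0 : 0 < Cf * Cg * (Real.sqrt A)⁻¹ := by positivity
  have hrEA : 0 < r * (E / A) := by positivity
  have houtpt : ∀ x : ℝ, ((Cf * Cg * (Real.sqrt A)⁻¹) * Real.exp (-((E/A)/2) * (x - 0)^2)) ^ r
      = (Cf * Cg * (Real.sqrt A)⁻¹) ^ r * Real.exp (-((r*(E/A))/2) * (x - 0)^2) := by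
    intro x
    rw [Real.mul_rpow hC0.le (Real.exp_pos _).le, ← Real.exp_mul]
    rw [show (-((E/A)/2) * (x - 0)^2) * r = -((r*(E/A))/2) * (x - 0)^2 by ring]
  have houter : (∫ x, (∫ y, f (x - y) * g y
        * Real.exp (-(1 / (2 * p' * q' * r')) * ((q' / v) * x - r' * y) ^ 2)
        ∂normalizedLebesgueR) ^ r ∂normalizedLebesgueR)
      = (Cf * Cg * (Real.sqrt A)⁻¹) ^ r * (Real.sqrt (r * (E/A)))⁻¹ := by
    simp only [hinner, houtpt]
    rw [integral_const_mul, gaussN (r * (E/A)) hrEA 0]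
  rw [houter]
  -- final algebraic identity via logarithms
  have hL0 : 0 < (Cf * Cg * (Real.sqrt A)⁻¹) ^ r * (Real.sqrt (r * (E/A)))⁻¹ := by positivity
  have hLHS0 : 0 < ((Cf * Cg * (Real.sqrt A)⁻¹) ^ r * (Real.sqrt (r * (E/A)))⁻¹) ^ (1/r) :=
    Real.rpow_pos_of_pos hL0 _
  have hR1 : 0 < p ^ (1/p) * q ^ (1/q) / r ^ (1/r) := by positivity
  have hR2 : 0 < s ^ (1/p) * t ^ (1/q) / (A ^ (1/r') * E ^ (1/r)) := by positivity
  have hRin0 : 0 < (p ^ (1/p) * q ^ (1/q) / r ^ (1/r))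
      * (s ^ (1/p) * t ^ (1/q) / (A ^ (1/r') * E ^ (1/r))) := mul_pos hR1 hR2
  have hRHS0 : 0 < ((p ^ (1/p) * q ^ (1/q) / r ^ (1/r))
      * (s ^ (1/p) * t ^ (1/q) / (A ^ (1/r') * E ^ (1/r)))) ^ ((1:ℝ)/2) :=
    Real.rpow_pos_of_pos hRin0 _
  have hr'inv : 1 / r' = 1 - 1/r := by
    rw [hr', one_div_div, sub_div, div_self hr0.ne']
  refine Real.log_injOn_pos (Set.mem_Ioi.2 hLHS0) (Set.mem_Ioi.2 hRHS0) ?_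
  rw [Real.log_rpow hL0,
    Real.log_mul (Real.rpow_pos_of_pos hC0 r).ne' (inv_pos.2 (Real.sqrt_pos.2 hrEA)).ne',
    Real.log_rpow hC0, Real.log_inv, Real.log_sqrt hrEA.le,
    Real.log_mul (mul_pos hCf0 hCg0).ne' (inv_pos.2 (Real.sqrt_pos.2 hA0)).ne',
    Real.log_mul hCf0.ne' hCg0.ne', Real.log_inv, Real.log_sqrt hA0.le,
    hCf, hCg, Real.log_rpow (mul_pos hp0 hs), Real.log_rpow (mul_pos hq0 ht),
    Real.log_mul hp0.ne' hs.ne', Real.log_mul hq0.ne' ht.ne',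
    Real.log_mul hr0.ne' (div_pos hE0 hA0).ne', Real.log_div hE0.ne' hA0.ne',
    Real.log_rpow hRin0, Real.log_mul hR1.ne' hR2.ne',
    Real.log_div (mul_pos (Real.rpow_pos_of_pos hp0 _) (Real.rpow_pos_of_pos hq0 _)).ne'
      (Real.rpow_pos_of_pos hr0 _).ne',
    Real.log_mul (Real.rpow_pos_of_pos hp0 _).ne' (Real.rpow_pos_of_pos hq0 _).ne',
    Real.log_div (mul_pos (Real.rpow_pos_of_pos hs _) (Real.rpow_pos_of_pos ht _)).ne'
      (mul_pos (Real.rpow_pos_of_pos hA0 _) (Real.rpow_pos_of_pos hE0 _)).ne',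
    Real.log_mul (Real.rpow_pos_of_pos hs _).ne' (Real.rpow_pos_of_pos ht _).ne',
    Real.log_mul (Real.rpow_pos_of_pos hA0 _).ne' (Real.rpow_pos_of_pos hE0 _).ne',
    Real.log_rpow hp0, Real.log_rpow hq0, Real.log_rpow hr0,
    Real.log_rpow hs, Real.log_rpow ht, Real.log_rpow hA0, Real.log_rpow hE0,
    hr'inv]
  field_simp
  ring
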